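/- Let K(m) = ∫_0^{π/2} (1 − m sin²θ)^{−1/2} dθ for m < 1 denote the complete elliptic integral of the first kind. Then lim_{ε → 0⁺} [ (ε⁴ + ε⁸)^{−1/4} · K( 1/2 + 1/(2√(1 + ε⁴)) ) ] / ( (2/ε) · log(1/ε) ) = 1. -/

import Mathlib

open MeasureTheory Filter

open Real

set_option maxHeartbeats 1000000


lemma sinlow {u : ℝ} (h0 : 0 ≤ u) (h1 : u ≤ π/2) : u ≤ Real.sin u * (1 + u^2) := by
  rcases le_or_gt u 1 with h|h
  · rcases eq_or_lt_of_le h0 with rfl|h0'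
    · simp
    · have h2 : u - u^3/4 < Real.sin u := by
        have := Real.sin_gt_sub_cube h0'; linarith [pow_pos h0' 3]
      have h3 : (u - u^3/4) * (1 + u^2) < Real.sin u * (1 + u^2) :=
        mul_lt_mul_of_pos_right h2 (by positivity)
      have h4 : (u - u^3/4) * (1 + u^2) = u + (3*u^3 - u^5)/4 := by ring
      have h5 : 0 ≤ 3*u^3 - u^5 := by nlinarith [mul_nonneg (pow_nonneg h0 3) (show (0:ℝ) ≤ 3 - u^2 by nlinarith)]
      linarith
  · have hpi := Real.pi_gt_three
    have hpi4 := Real.pi_le_four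
    have hs : Real.sin 1 ≤ Real.sin u :=
      Real.sin_le_sin_of_le_of_le_pi_div_two (by nlinarith) h1 h.le
    have h2 : (1:ℝ)/2 < Real.sin 1 := by
      calc (1:ℝ)/2 = Real.sin (π/6) := by rw [Real.sin_pi_div_six]
        _ < Real.sin 1 := by
          apply Real.sin_lt_sin_of_lt_of_le_pi_div_two (by nlinarith) (by nlinarith)
          nlinarith
    nlinarith [sq_nonneg (1-u)]

lemma cont_inv_sqrt (δ : ℝ) (hδ : 0 < δ) :
    Continuous (fun u : ℝ => (Real.sqrt (δ + u^2))⁻¹) := by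
  apply Continuous.inv₀
  · exact Real.continuous_sqrt.comp (by continuity)
  · intro x
    positivity

lemma int_arsinh (δ : ℝ) (hδ : 0 < δ) (b : ℝ) :
    ∫ u in (0:ℝ)..b, (Real.sqrt (δ + u^2))⁻¹ = Real.arsinh (b / Real.sqrt δ) := by
  have hsd : (0:ℝ) < Real.sqrt δ := Real.sqrt_pos.2 hδ
  have key : ∀ u : ℝ, HasDerivAt (fun v => Real.arsinh (v / Real.sqrt δ))
      ((Real.sqrt (δ + u^2))⁻¹) u := by
    intro u
    have h1 : HasDerivAt (fun v : ℝ => v / Real.sqrt δ) ((Real.sqrt δ)⁻¹) u := by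
      simpa using (hasDerivAt_id u).div_const (Real.sqrt δ)
    have h2 := (Real.hasDerivAt_arsinh (u / Real.sqrt δ)).comp u h1
    refine h2.congr_deriv ?_
    have hq : Real.sqrt δ * Real.sqrt (1 + (u / Real.sqrt δ)^2) = Real.sqrt (δ + u^2) := by
      rw [← Real.sqrt_mul hδ.le]
      congr 1
      rw [div_pow, Real.sq_sqrt hδ.le]
      field_simp
    rw [← hq]
    rw [mul_inv]
    ring
  rw [intervalIntegral.integral_eq_sub_of_hasDerivAt (fun u _ => key u)
    ((cont_inv_sqrt δ hδ).intervalIntegrable 0 b)]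
  simp

lemma pointwise_up {m δ v x : ℝ} (hm : 1/2 ≤ m) (hm1 : m < 1) (hδd : δ = 1 - m)
    (hv0 : 0 ≤ v) (hsl : v ≤ Real.sin v * (1+v^2)) (hx : x = δ + m * Real.sin v^2) :
    (Real.sqrt x)⁻¹ ≤ (Real.sqrt m)⁻¹ * ((Real.sqrt (δ + v^2))⁻¹ + v) := by
  have hδ : 0 < δ := by rw [hδd]; linarith
  have hsv0 : 0 ≤ Real.sin v * (1+v^2) := le_trans hv0 hsl
  have hx0 : 0 < x := by
    rw [hx]
    nlinarith [sq_nonneg (Real.sin v)]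
  set a := Real.sqrt x with hadef
  set b := Real.sqrt (δ + v^2) with hbdef
  set s := Real.sqrt m with hsdef
  have ha0 : 0 < a := Real.sqrt_pos.2 hx0
  have hb0 : 0 < b := Real.sqrt_pos.2 (by positivity)
  have hs0 : 0 < s := Real.sqrt_pos.2 (by linarith)
  have ha2 : a^2 = x := Real.sq_sqrt hx0.le
  have hb2 : b^2 = δ + v^2 := Real.sq_sqrt (by positivity)
  have hs2 : s^2 = m := Real.sq_sqrt (by linarith)
  have hvb : v ≤ b := by
    have h := Real.sqrt_le_sqrt (show v^2 ≤ δ + v^2 by linarith)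
    rwa [Real.sqrt_sq hv0] at h
  have hsin2 : v^2 ≤ Real.sin v^2 * (1+v^2)^2 := by
    have h := mul_self_le_mul_self hv0 hsl
    nlinarith [h]
  have hstep : m * (δ + v^2) ≤ x * (1+v^2)^2 := by
    have h1 : m * v^2 ≤ m * (Real.sin v^2 * (1+v^2)^2) :=
      mul_le_mul_of_nonneg_left hsin2 (by linarith)
    have h2 : δ ≤ δ * (1+v^2)^2 := le_mul_of_one_le_right hδ.le (by nlinarith [sq_nonneg v])
    have h3 : m * δ ≤ δ := mul_le_of_le_one_left hδ.le hm1.le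
    rw [hx]
    nlinarith [h1, h2, h3]
  have hkey2 : (s*b)^2 ≤ (a*(1+v^2))^2 := by
    calc (s*b)^2 = m * (δ + v^2) := by rw [mul_pow, hs2, hb2]
      _ ≤ x * (1+v^2)^2 := hstep
      _ = (a*(1+v^2))^2 := by rw [mul_pow, ha2]
  have hkey : s*b ≤ a*(1+v^2) := by
    have h := Real.sqrt_le_sqrt hkey2
    rwa [Real.sqrt_sq (mul_pos hs0 hb0).le,
      Real.sqrt_sq (mul_pos ha0 (show (0:ℝ) < 1+v^2 by positivity)).le] at h
  have hv2b : v^2 ≤ v*b := by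
    have h := mul_le_mul_of_nonneg_left hvb hv0
    nlinarith [h]
  have hkey' : s*b ≤ a*(1+v*b) :=
    le_trans hkey (mul_le_mul_of_nonneg_left (by linarith) ha0.le)
  have hsb0 : 0 < s*b := mul_pos hs0 hb0
  rw [inv_eq_one_div a]
  have hrw2 : s⁻¹ * (b⁻¹ + v) = (1+v*b)/(s*b) := by
    field_simp
  rw [hrw2, div_le_div_iff₀ ha0 hsb0]
  nlinarith [hkey']

lemma Kbounds {m : ℝ} (hm : 1/2 ≤ m) (hm1 : m < 1) :
    Real.arsinh ((π/2) / Real.sqrt (1-m)) ≤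
      (∫ θ in (0:ℝ)..(π/2), (1 - m * Real.sin θ^2) ^ (-(1:ℝ)/2)) ∧
    (∫ θ in (0:ℝ)..(π/2), (1 - m * Real.sin θ^2) ^ (-(1:ℝ)/2)) ≤
      (Real.sqrt m)⁻¹ * (Real.arsinh ((π/2)/Real.sqrt (1-m)) + π^2/8) := by
  set δ := 1 - m with hδdef
  have hδ : 0 < δ := by simp [hδdef]; linarith
  have hpi : (0:ℝ) < π := Real.pi_pos
  have hpos : ∀ θ : ℝ, 0 < 1 - m * Real.sin θ^2 := by
    intro θ
    nlinarith [Real.sin_sq_le_one θ, sq_nonneg (Real.sin θ)]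
  have hconv : ∀ θ : ℝ, (1 - m * Real.sin θ^2) ^ (-(1:ℝ)/2)
      = (Real.sqrt (1 - m * Real.sin θ^2))⁻¹ := by
    intro θ
    rw [show (-(1:ℝ)/2) = -(1/2) by norm_num, Real.rpow_neg (hpos θ).le,
      Real.sqrt_eq_rpow]
  have hrw : ∀ θ : ℝ, 1 - m * Real.sin θ^2 = δ + m * Real.sin (π/2-θ)^2 := by
    intro θ
    rw [Real.sin_pi_div_two_sub, Real.cos_sq']
    ring
  -- continuity of the main integrand
  have hcontK : Continuous (fun θ : ℝ => (1 - m * Real.sin θ^2) ^ (-(1:ℝ)/2)) := by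
    apply Continuous.rpow_const
    · continuity
    · intro θ; exact Or.inl (hpos θ).ne'
  have hcontLow : Continuous (fun θ : ℝ => (Real.sqrt (δ + (π/2-θ)^2))⁻¹) :=
    (cont_inv_sqrt δ hδ).comp (by continuity)
  have hcontUp : Continuous (fun θ : ℝ =>
      (Real.sqrt m)⁻¹ * ((Real.sqrt (δ + (π/2-θ)^2))⁻¹ + (π/2-θ))) := by
    apply Continuous.mul continuous_const
    exact hcontLow.add (by continuity)
  -- integral of the lower comparison function
  have hIlow : (∫ θ in (0:ℝ)..(π/2), (Real.sqrt (δ + (π/2-θ)^2))⁻¹)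
      = Real.arsinh ((π/2) / Real.sqrt δ) := by
    rw [intervalIntegral.integral_comp_sub_left (fun u => (Real.sqrt (δ + u^2))⁻¹) (π/2)]
    simp only [sub_self, sub_zero]
    exact int_arsinh δ hδ (π/2)
  -- integral of (π/2 - θ)
  have hIv : (∫ θ in (0:ℝ)..(π/2), (π/2-θ)) = π^2/8 := by
    rw [intervalIntegral.integral_comp_sub_left (fun u => u) (π/2)]
    simp only [sub_self, sub_zero]
    rw [integral_id]
    ring
  constructor
  · -- lower bound
    rw [← hIlow]
    apply intervalIntegral.integral_mono_on (by positivity)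
      (hcontLow.intervalIntegrable 0 (π/2)) (hcontK.intervalIntegrable 0 (π/2))
    intro θ hθ
    rw [hconv θ]
    have hv0 : 0 ≤ π/2 - θ := by linarith [hθ.2]
    have hsv : Real.sin (π/2-θ) ≤ π/2-θ := Real.sin_le hv0
    have hsv0 : 0 ≤ Real.sin (π/2-θ) :=
      Real.sin_nonneg_of_nonneg_of_le_pi hv0 (by linarith [hθ.1])
    have hle : 1 - m * Real.sin θ^2 ≤ δ + (π/2-θ)^2 := by
      rw [hrw θ]
      nlinarith
    exact inv_anti₀ (Real.sqrt_pos.2 (hpos θ)) (Real.sqrt_le_sqrt hle)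
  · -- upper bound
    have hIup : (∫ θ in (0:ℝ)..(π/2),
        (Real.sqrt m)⁻¹ * ((Real.sqrt (δ + (π/2-θ)^2))⁻¹ + (π/2-θ)))
        = (Real.sqrt m)⁻¹ * (Real.arsinh ((π/2)/Real.sqrt δ) + π^2/8) := by
      rw [intervalIntegral.integral_const_mul, intervalIntegral.integral_add
        (hcontLow.intervalIntegrable 0 (π/2)) (by apply Continuous.intervalIntegrable; continuity),
        hIlow, hIv]
    rw [← hIup]
    apply intervalIntegral.integral_mono_on (by positivity)
      (hcontK.intervalIntegrable 0 (π/2)) (hcontUp.intervalIntegrable 0 (π/2))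
    intro θ hθ
    rw [hconv θ]
    have hv0 : 0 ≤ π/2 - θ := by linarith [hθ.2]
    have hv2 : π/2 - θ ≤ π/2 := by linarith [hθ.1]
    exact pointwise_up hm hm1 rfl hv0 (sinlow hv0 hv2) (hrw θ)

lemma Fb {ε : ℝ} (h0 : 0 < ε) (h1 : ε < 1/2) :
    (1+ε^4) ^ (-(1:ℝ)/4) ≤
      ((ε ^ 4 + ε ^ 8) ^ (-(1 : ℝ) / 4) * ∫ θ in (0:ℝ)..(π/2),
        (1 - (1/2 + 1/(2*Real.sqrt (1+ε^4))) * Real.sin θ ^ 2) ^ (-(1:ℝ)/2)) /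
        ((2/ε) * Real.log (1/ε)) ∧
    ((ε ^ 4 + ε ^ 8) ^ (-(1 : ℝ) / 4) * ∫ θ in (0:ℝ)..(π/2),
        (1 - (1/2 + 1/(2*Real.sqrt (1+ε^4))) * Real.sin θ ^ 2) ^ (-(1:ℝ)/2)) /
        ((2/ε) * Real.log (1/ε)) ≤
      (Real.sqrt (1/2 + 1/(2*Real.sqrt (1+ε^4))))⁻¹ *
        ((2*Real.log (1/ε) + 20)/(2*Real.log (1/ε))) := by
  have hpi : (0:ℝ) < π := Real.pi_pos
  have hpi4 : π ≤ 4 := Real.pi_le_four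
  have hpi3 : 3 < π := Real.pi_gt_three
  have hpisq : π^2/8 ≤ 2 := by nlinarith
  set s := Real.sqrt (1+ε^4) with hsdef
  have hs0 : 0 < s := Real.sqrt_pos.2 (by positivity)
  have hs2 : s^2 = 1+ε^4 := Real.sq_sqrt (by positivity)
  have hs1 : 1 ≤ s := by nlinarith [pow_pos h0 4]
  have he2 : ε^2 ≤ 1/4 := by nlinarith
  have he4 : ε^4 ≤ 1 := by nlinarith [he2, sq_nonneg ε]
  have hsu : s ≤ 3/2 := by nlinarith
  have hs1' : 1 < s := by nlinarith [pow_pos h0 4]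
  set m := 1/2 + 1/(2*s) with hmdef
  have hm : 1/2 ≤ m := by
    rw [hmdef]
    have : 0 < 1/(2*s) := by positivity
    linarith
  have hm1 : m < 1 := by
    rw [hmdef]
    have h : 1/(2*s) < 1/2 := by
      apply one_div_lt_one_div_of_lt <;> linarith
    linarith
  set δ := 1 - m with hδdef
  have hδ : 0 < δ := by rw [hδdef]; linarith
  have hδeq : δ = (s-1)/(2*s) := by
    rw [hδdef, hmdef]
    field_simp
    ring
  have hδhigh : δ ≤ ε^4/4 := by
    rw [hδeq, div_le_div_iff₀ (by positivity) (by norm_num)]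
    nlinarith [mul_nonneg (sub_nonneg.2 hs1) (show (0:ℝ) ≤ 2*s*(s+1) - 4 by nlinarith)]
  have hδlow : ε^4/8 ≤ δ := by
    rw [hδeq, div_le_div_iff₀ (by norm_num) (by positivity)]
    nlinarith [mul_nonneg (sub_nonneg.2 hs1) (show (0:ℝ) ≤ 8 - 2*s*(s+1) by nlinarith)]
  -- sqrt δ bounds
  have hsd0 : 0 < Real.sqrt δ := Real.sqrt_pos.2 hδ
  have hsdu : Real.sqrt δ ≤ ε^2/2 := by
    have h := Real.sqrt_le_sqrt hδhigh
    rwa [show ε^4/4 = (ε^2/2)^2 by ring, Real.sqrt_sq (by positivity)] at h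
  have hsdl : ε^2/3 ≤ Real.sqrt δ := by
    have h := Real.sqrt_le_sqrt (show (ε^2/3)^2 ≤ δ by nlinarith)
    rwa [Real.sqrt_sq (by positivity)] at h
  set x := (π/2) / Real.sqrt δ with hxdef
  have hx0 : 0 < x := by positivity
  have hxl : ε⁻¹^2 ≤ x := by
    rw [hxdef]
    calc ε⁻¹^2 = 1 / ε^2 := by field_simp
      _ ≤ (π/2) / (ε^2/2) := by
          rw [div_le_div_iff₀ (by positivity) (by positivity)]
          nlinarith
      _ ≤ (π/2) / Real.sqrt δ := by
          apply div_le_div_of_nonneg_left (by positivity) hsd0 hsdu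
  have hxu : x ≤ 6 * ε⁻¹^2 := by
    rw [hxdef]
    calc (π/2) / Real.sqrt δ ≤ (π/2) / (ε^2/3) := by
          apply div_le_div_of_nonneg_left (by positivity) (by positivity) hsdl
      _ ≤ 6 * ε⁻¹^2 := by
          rw [div_le_iff₀ (by positivity)]
          field_simp
          nlinarith
  -- log facts
  have hL0 : 0 < Real.log (1/ε) := Real.log_pos (by rw [lt_div_iff₀ h0]; linarith)
  have hlogeps : Real.log (ε⁻¹^2) = 2 * Real.log (1/ε) := by
    rw [Real.log_pow, one_div]
    push_cast
    ring
  -- arsinh bounds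
  have harsinh_eq : Real.arsinh x = Real.log (x + Real.sqrt (1+x^2)) := rfl
  have hAl : 2 * Real.log (1/ε) ≤ Real.arsinh x := by
    rw [← hlogeps, harsinh_eq]
    apply Real.log_le_log (by positivity)
    have h1 : (0:ℝ) ≤ Real.sqrt (1+x^2) := Real.sqrt_nonneg _
    linarith [hxl]
  have hAu : Real.arsinh x ≤ 2 * Real.log (1/ε) + 17 := by
    rw [harsinh_eq]
    have hsq : Real.sqrt (1+x^2) ≤ 1 + x := by
      have h := Real.sqrt_le_sqrt (show 1+x^2 ≤ (1+x)^2 by nlinarith)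
      rwa [Real.sqrt_sq (by positivity)] at h
    have h3x : x + Real.sqrt (1+x^2) ≤ 3*x := by
      have h1x : 1 ≤ x := by
        have h1e : (1:ℝ) ≤ ε⁻¹ := (one_le_inv₀ h0).2 (by linarith)
        nlinarith
      linarith
    calc Real.log (x + Real.sqrt (1+x^2)) ≤ Real.log (3*x) :=
          Real.log_le_log (by positivity) h3x
      _ ≤ Real.log (18 * ε⁻¹^2) := by
          apply Real.log_le_log (by positivity)
          linarith
      _ = Real.log 18 + Real.log (ε⁻¹^2) := by
          rw [Real.log_mul (by norm_num) (by positivity)]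
      _ ≤ 2 * Real.log (1/ε) + 17 := by
          rw [hlogeps]
          have := Real.log_le_sub_one_of_pos (show (0:ℝ) < 18 by norm_num)
          linarith
  -- apply K bounds
  obtain ⟨hK1, hK2⟩ := Kbounds hm hm1
  rw [← hδdef] at hK1 hK2
  set K := ∫ θ in (0:ℝ)..(π/2), (1 - m * Real.sin θ^2) ^ (-(1:ℝ)/2) with hKdef
  set L := Real.log (1/ε) with hLdef
  have h2L : 0 < 2*L := by linarith
  have hKge : 2*L ≤ K := le_trans hAl hK1
  have hK0 : 0 < K := lt_of_lt_of_le h2L hKge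
  set c := (1+ε^4) ^ (-(1:ℝ)/4) with hcdef
  have hc0 : 0 < c := Real.rpow_pos_of_pos (by positivity) _
  have hc1 : c ≤ 1 := Real.rpow_le_one_of_one_le_of_nonpos (by linarith [pow_pos h0 4]) (by norm_num)
  have hsm0 : 0 < (Real.sqrt m)⁻¹ := by
    rw [inv_pos]
    exact Real.sqrt_pos.2 (by linarith)
  -- rewrite the prefactor
  have hP : (ε^4+ε^8 : ℝ) ^ (-(1:ℝ)/4) = ε⁻¹ * c := by
    rw [hcdef, show ε^4+ε^8 = ε^4 * (1+ε^4) by ring,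
      Real.mul_rpow (by positivity) (by positivity)]
    congr 1
    rw [← Real.rpow_natCast ε 4, ← Real.rpow_mul h0.le,
      show ((4:ℕ):ℝ) * (-(1:ℝ)/4) = -1 by norm_num, Real.rpow_neg_one]
  have hFeq : ((ε^4+ε^8 : ℝ) ^ (-(1:ℝ)/4) * K) / ((2/ε) * L) = c * K / (2*L) := by
    rw [hP]
    field_simp
  rw [hFeq]
  constructor
  · calc c = c * 1 := (mul_one c).symm
      _ ≤ c * (K / (2*L)) := by
          apply mul_le_mul_of_nonneg_left _ hc0.le
          rw [le_div_iff₀ h2L]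
          linarith
      _ = c * K / (2*L) := (mul_div_assoc c K (2*L)).symm
  · have hKup : K ≤ (Real.sqrt m)⁻¹ * (2*L + 20) := by
      apply le_trans hK2
      apply mul_le_mul_of_nonneg_left _ hsm0.le
      linarith [hAu, hpisq]
    have hcK : c * K ≤ (Real.sqrt m)⁻¹ * (2*L + 20) := by
      calc c * K ≤ 1 * K := mul_le_mul_of_nonneg_right hc1 hK0.le
        _ = K := one_mul K
        _ ≤ _ := hKup
    calc c * K / (2*L) ≤ ((Real.sqrt m)⁻¹ * (2*L + 20)) / (2*L) := by
          exact div_le_div_of_nonneg_right hcK h2L.le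
      _ = (Real.sqrt m)⁻¹ * ((2*L + 20) / (2*L)) := mul_div_assoc _ _ _

/-- The product (power times logarithm) behavior of the Grushin fundamental solution
along the curve `x(ε) = (ε, 2ε⁴)`, `y(ε) = (ε, ε⁴)`:
`(ε⁴+ε⁸)^{−1/4} K(1/2 + 1/(2√(1+ε⁴))) ∼ (2/ε) log(1/ε)` as `ε → 0⁺`,
where `K` is the complete elliptic integral of the first kind. -/
theorem stmt19 :
    Tendsto (fun ε : ℝ =>
        ((ε ^ 4 + ε ^ 8) ^ (-(1 : ℝ) / 4) *
            ∫ θ in (0 : ℝ)..(Real.pi / 2),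
              (1 - (1 / 2 + 1 / (2 * Real.sqrt (1 + ε ^ 4))) * Real.sin θ ^ 2)
                ^ (-(1 : ℝ) / 2)) /
          ((2 / ε) * Real.log (1 / ε)))
      (nhdsWithin 0 (Set.Ioi 0)) (nhds 1) := by
  have hlo : Tendsto (fun ε : ℝ => (1+ε^4) ^ (-(1:ℝ)/4)) (nhdsWithin 0 (Set.Ioi 0)) (nhds 1) := by
    have c1 : ContinuousAt (fun ε : ℝ => (1+ε^4) ^ (-(1:ℝ)/4)) 0 := by
      apply ContinuousAt.rpow_const (by fun_prop)
      left; norm_num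
    have h := c1.tendsto
    rw [show ((1:ℝ)+0^4) ^ (-(1:ℝ)/4) = 1 by
      rw [show ((1:ℝ)+0^4) = 1 by norm_num, Real.one_rpow]] at h
    exact h.mono_left nhdsWithin_le_nhds
  -- log tendsto
  have hLtop : Tendsto (fun ε : ℝ => 2 * Real.log (1/ε)) (nhdsWithin 0 (Set.Ioi 0)) atTop := by
    have h1 : Tendsto (fun ε : ℝ => Real.log (1/ε)) (nhdsWithin 0 (Set.Ioi 0)) atTop := by
      have h2 : Tendsto (fun ε : ℝ => -Real.log ε) (nhdsWithin 0 (Set.Ioi 0)) atTop :=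
        tendsto_neg_atBot_atTop.comp Real.tendsto_log_nhdsGT_zero
      refine h2.congr (fun ε => ?_)
      rw [one_div, Real.log_inv]
    exact h1.const_mul_atTop (by norm_num)
  have hup : Tendsto (fun ε : ℝ => (Real.sqrt (1/2 + 1/(2*Real.sqrt (1+ε^4))))⁻¹ *
      ((2*Real.log (1/ε) + 20)/(2*Real.log (1/ε)))) (nhdsWithin 0 (Set.Ioi 0)) (nhds 1) := by
    have hg : Tendsto (fun ε : ℝ => (Real.sqrt (1/2 + 1/(2*Real.sqrt (1+ε^4))))⁻¹)
        (nhdsWithin 0 (Set.Ioi 0)) (nhds 1) := by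
      have c2 : ContinuousAt (fun ε : ℝ => (Real.sqrt (1/2 + 1/(2*Real.sqrt (1+ε^4))))⁻¹) 0 := by
        apply ContinuousAt.inv₀
        · apply Real.continuous_sqrt.continuousAt.comp
          apply ContinuousAt.add continuousAt_const
          apply ContinuousAt.div continuousAt_const
          · apply ContinuousAt.mul continuousAt_const
            exact Real.continuous_sqrt.continuousAt.comp (by fun_prop)
          · norm_num
        · norm_num
      have h := c2.tendsto
      rw [show (Real.sqrt (1/2 + 1/(2*Real.sqrt (1+(0:ℝ)^4))))⁻¹ = 1 by
        norm_num [Real.sqrt_one]] at h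
      exact h.mono_left nhdsWithin_le_nhds
    have hh : Tendsto (fun ε : ℝ => (2*Real.log (1/ε) + 20)/(2*Real.log (1/ε)))
        (nhdsWithin 0 (Set.Ioi 0)) (nhds 1) := by
      have h20 : Tendsto (fun ε : ℝ => 1 + 20/(2*Real.log (1/ε)))
          (nhdsWithin 0 (Set.Ioi 0)) (nhds 1) := by
        have h1 : Tendsto (fun ε : ℝ => 20/(2*Real.log (1/ε)))
            (nhdsWithin 0 (Set.Ioi 0)) (nhds 0) :=
          Tendsto.div_atTop tendsto_const_nhds hLtop
        have h := (tendsto_const_nhds (x := (1:ℝ))).add h1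
        simpa using h
      refine Tendsto.congr' ?_ h20
      filter_upwards [hLtop.eventually (eventually_gt_atTop 0)] with ε hε
      have hne : Real.log (1/ε) ≠ 0 := by intro h; rw [h] at hε; simp at hε
      field_simp
    have h := hg.mul hh
    simpa using h
  apply tendsto_of_tendsto_of_tendsto_of_le_of_le' hlo hup
  · filter_upwards [Ioo_mem_nhdsGT (by norm_num : (0:ℝ) < 1/2)] with ε hε
    exact (Fb hε.1 hε.2).1
  · filter_upwards [Ioo_mem_nhdsGT (by norm_num : (0:ℝ) < 1/2)] with ε hε
    exact (Fb hε.1 hε.2).2
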